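/- arXiv:1801.07898 — 2 statements merged into one kernel-verified Lean document; each statement's English description precedes it below -/
import Mathlib

section
/- Let A be the matrix-model algebra determined by k, r_1, …, r_K and S. Then the left ideals of A contained in J(A) are in bijection with the K-tuples (V_1, …, V_K) of k-linear subspaces with V_i ⊆ 𝕍_i for each i. Explicitly, to each such tuple assign the set L of all elements M of J(A) such that, for every row index (i, t), the vector in k^n of x-coefficients of the (i, t)-th row of M lies in V_i; then L is a left ideal of A contained in J(A), and every left ideal of A contained in J(A) arises from exactly one tuple (V_1, …, V_K) in this way. -/
open scoped Matrix

/-- Row/column index set: pairs `(i, t)` with `1 ≤ i ≤ K`, `1 ≤ t ≤ rᵢ`. -/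
abbrev MIdx (K : ℕ) (r : Fin K → ℕ) : Type := Σ i : Fin K, Fin (r i)

/-- The matrix-model algebra determined by `k`, `r₁, …, r_K` and `S`: the `k`-subalgebra of
`M_n(k[x]/(x²))` of matrices whose `((i,t),(j,s))` entry has zero constant term whenever
`i ≠ j` and zero `x`-coefficient whenever `(i, j) ∉ S`. -/
def ModelAlgebra (k : Type) [Field k] (K : ℕ) (r : Fin K → ℕ)
    (S : Set (Fin K × Fin K)) :
    Subalgebra k (Matrix (MIdx K r) (MIdx K r) (DualNumber k)) where
  carrier := {M | ∀ p q : MIdx K r,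
    (p.1 ≠ q.1 → (M p q).fst = 0) ∧ ((p.1, q.1) ∉ S → (M p q).snd = 0)}
  add_mem' := by
    intro M N hM hN p q
    refine ⟨fun h => ?_, fun h => ?_⟩
    · simp [Matrix.add_apply, (hM p q).1 h, (hN p q).1 h]
    · simp [Matrix.add_apply, (hM p q).2 h, (hN p q).2 h]
  mul_mem' := by
    intro M N hM hN p q
    constructor
    · intro h
      rw [Matrix.mul_apply, TrivSqZeroExt.fst_sum]
      refine Finset.sum_eq_zero fun x _ => ?_
      rw [TrivSqZeroExt.fst_mul]
      by_cases hx : p.1 = x.1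
      · rw [(hN x q).1 (hx ▸ h), mul_zero]
      · rw [(hM p x).1 hx, zero_mul]
    · intro h
      rw [Matrix.mul_apply, TrivSqZeroExt.snd_sum]
      refine Finset.sum_eq_zero fun x _ => ?_
      rw [TrivSqZeroExt.snd_mul]
      by_cases hx : p.1 = x.1
      · have h1 : (N x q).snd = 0 := (hN x q).2 (by rw [← hx]; exact h)
        by_cases hx2 : x.1 = q.1
        · have h2 : (M p x).snd = 0 := (hM p x).2 (by rw [hx, hx2] at h ⊢; exact h)
          simp [h1, h2]
        · have h2 : (N x q).fst = 0 := (hN x q).1 hx2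
          simp [h1, h2]
      · have h1 : (M p x).fst = 0 := (hM p x).1 hx
        by_cases hx2 : x.1 = q.1
        · have h2 : (M p x).snd = 0 := (hM p x).2 (by rw [hx2]; exact h)
          simp [h1, h2]
        · have h2 : (N x q).fst = 0 := (hN x q).1 hx2
          simp [h1, h2]
  algebraMap_mem' := by
    intro c p q
    rw [Matrix.algebraMap_matrix_apply]
    by_cases hpq : p = q
    · subst hpq
      refine ⟨fun h => absurd rfl h, fun _ => ?_⟩
      rw [if_pos rfl]
      rfl
    · refine ⟨fun h => ?_, fun h => ?_⟩ <;> simp [hpq]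

/-- The subspace `𝕍ᵢ = { v ∈ kⁿ : v_{(j,s)} = 0 whenever (i,j) ∉ S }`. -/
def Vspace (k : Type) [Field k] (K : ℕ) (r : Fin K → ℕ) (S : Set (Fin K × Fin K))
    (i : Fin K) : Submodule k (MIdx K r → k) where
  carrier := {v | ∀ q : MIdx K r, (i, q.1) ∉ S → v q = 0}
  add_mem' := by intro a b ha hb q hq; simp [ha q hq, hb q hq]
  zero_mem' := by intro q hq; rfl
  smul_mem' := by intro c a ha q hq; simp [ha q hq]

/-- The set of elements of `J(A)` all of whose rows have their vector of `x`-coefficients in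
the corresponding subspace of the tuple `V`. -/
def TupleSet (k : Type) [Field k] (K : ℕ) (r : Fin K → ℕ) (S : Set (Fin K × Fin K))
    (V : Fin K → Submodule k (MIdx K r → k)) : Set ↥(ModelAlgebra k K r S) :=
  {m | m ∈ (⊥ : Ideal ↥(ModelAlgebra k K r S)).jacobson ∧
    ∀ p : MIdx K r,
      (fun q => ((m : Matrix (MIdx K r) (MIdx K r) (DualNumber k)) p q).snd) ∈ V p.1}

set_option synthInstance.maxHeartbeats 1000000
set_option maxHeartbeats 2000000
namespace ModelAux

variable {k : Type} [Field k] {K : ℕ} {r : Fin K → ℕ} {S : Set (Fin K × Fin K)}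

open TrivSqZeroExt

lemma memA {M : Matrix (MIdx K r) (MIdx K r) (DualNumber k)} (h : M ∈ ModelAlgebra k K r S)
    (p q : MIdx K r) :
    (p.1 ≠ q.1 → (M p q).fst = 0) ∧ ((p.1, q.1) ∉ S → (M p q).snd = 0) := h p q

/-- single-entry constant matrix -/
def Econst (p₀ q₀ : MIdx K r) (c : k) : Matrix (MIdx K r) (MIdx K r) (DualNumber k) :=
  fun p q => if p = p₀ ∧ q = q₀ then TrivSqZeroExt.inl c else 0

lemma Econst_mem (p₀ q₀ : MIdx K r) (h : p₀.1 = q₀.1) (c : k) :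
    Econst p₀ q₀ c ∈ ModelAlgebra k K r S := by
  intro p q
  constructor
  · intro hpq
    by_cases hc : p = p₀ ∧ q = q₀
    · exact absurd (hc.1 ▸ hc.2 ▸ h) hpq
    · simp [Econst, hc]
  · intro _
    by_cases hc : p = p₀ ∧ q = q₀ <;> simp [Econst, hc]

/-- a matrix with a single nonzero row, all of whose entries are multiples of `x` -/
def rowMat (p₀ : MIdx K r) (v : MIdx K r → k) : Matrix (MIdx K r) (MIdx K r) (DualNumber k) :=
  fun p q => if p = p₀ then TrivSqZeroExt.inr (v q) else 0

lemma rowMat_mem (p₀ : MIdx K r) (v : MIdx K r → k) (hv : v ∈ Vspace k K r S p₀.1) :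
    rowMat p₀ v ∈ ModelAlgebra k K r S := by
  intro p q
  constructor
  · intro _
    by_cases hc : p = p₀ <;> simp [rowMat, hc]
  · intro hq
    by_cases hc : p = p₀
    · subst hc
      simp [rowMat, hv q hq]
    · simp [rowMat, hc]

lemma mul_eq_zero_of_fst_eq_zero (n n' : ↥(ModelAlgebra k K r S))
    (hn : ∀ p q, ((n : Matrix (MIdx K r) (MIdx K r) (DualNumber k)) p q).fst = 0)
    (hn' : ∀ p q, ((n' : Matrix (MIdx K r) (MIdx K r) (DualNumber k)) p q).fst = 0) :
    n * n' = 0 := by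
  apply Subtype.ext
  show (n : Matrix (MIdx K r) (MIdx K r) (DualNumber k)) * (n' : Matrix (MIdx K r) (MIdx K r) (DualNumber k)) = (0 : Matrix _ _ _)
  ext p q
  · simp [Matrix.mul_apply, TrivSqZeroExt.fst_sum, hn]
  · simp [Matrix.mul_apply, TrivSqZeroExt.snd_sum, TrivSqZeroExt.snd_mul, hn, hn']

lemma mem_jacobson_of_fst (m : ↥(ModelAlgebra k K r S))
    (h : ∀ p q, ((m : Matrix (MIdx K r) (MIdx K r) (DualNumber k)) p q).fst = 0) :
    m ∈ (⊥ : Ideal ↥(ModelAlgebra k K r S)).jacobson := by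
  rw [Ideal.jacobson]
  refine Submodule.mem_sInf.mpr fun J hJ => ?_
  by_contra hm
  have hlt : J < J ⊔ Ideal.span {m} := by
    refine left_lt_sup.mpr fun hle => hm ?_
    exact hle (Ideal.subset_span rfl)
  have htop : J ⊔ Ideal.span {m} = ⊤ := (Ideal.isMaximal_def.mp hJ.2).2 _ hlt
  have h1 : (1 : ↥(ModelAlgebra k K r S)) ∈ J ⊔ Ideal.span {m} := htop ▸ Submodule.mem_top
  obtain ⟨a, ha, b, hb, hab⟩ := Submodule.mem_sup.mp h1
  obtain ⟨c, hc⟩ := Submodule.mem_span_singleton.mp hb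
  rw [smul_eq_mul] at hc
  subst hc
  have hfst : ∀ p q, ((↑(c * m) : Matrix (MIdx K r) (MIdx K r) (DualNumber k)) p q).fst = 0 := by
    intro p q
    show (((c : Matrix (MIdx K r) (MIdx K r) (DualNumber k)) * (m : Matrix (MIdx K r) (MIdx K r) (DualNumber k))) p q).fst = 0
    rw [Matrix.mul_apply, TrivSqZeroExt.fst_sum]
    exact Finset.sum_eq_zero fun x _ => by rw [TrivSqZeroExt.fst_mul, h, mul_zero]
  have hsq : (c * m) * (c * m) = 0 := mul_eq_zero_of_fst_eq_zero _ _ hfst hfst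
  have ha1 : a = 1 - c * m := eq_sub_of_add_eq hab
  have hunit : IsUnit a := by
    refine isUnit_iff_exists.mpr ⟨1 + c * m, ?_, ?_⟩
    · rw [ha1, sub_mul, one_mul, mul_add, mul_one, hsq, add_zero, add_sub_cancel_right]
    · rw [ha1, mul_sub, mul_one, add_mul, one_mul, hsq, add_zero, add_sub_cancel_right]
  exact hJ.2.ne_top (Ideal.eq_top_of_isUnit_mem J ha hunit)

def colIdeal (q₀ : MIdx K r) (S : Set (Fin K × Fin K)) : Ideal ↥(ModelAlgebra k K r S) where
  carrier := {m | ∀ t : Fin (r q₀.1),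
    ((m : Matrix (MIdx K r) (MIdx K r) (DualNumber k)) ⟨q₀.1, t⟩ q₀).fst = 0}
  zero_mem' := fun t => by simp
  add_mem' := fun {a b} ha hb t => by
    show (((a : Matrix (MIdx K r) (MIdx K r) (DualNumber k)) + ↑b) ⟨q₀.1, t⟩ q₀).fst = 0
    simp [ha t, hb t]
  smul_mem' := by
    intro c m hm t
    show (((c : Matrix (MIdx K r) (MIdx K r) (DualNumber k)) * (m : Matrix (MIdx K r) (MIdx K r) (DualNumber k))) ⟨q₀.1, t⟩ q₀).fst = 0
    rw [Matrix.mul_apply, TrivSqZeroExt.fst_sum]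
    refine Finset.sum_eq_zero fun x _ => ?_
    rw [TrivSqZeroExt.fst_mul]
    by_cases hx : x.1 = q₀.1
    · obtain ⟨x1, x2⟩ := x
      dsimp at hx
      subst hx
      rw [hm x2, mul_zero]
    · rw [(memA c.2 ⟨q₀.1, t⟩ x).1 (fun h => hx h.symm), zero_mul]

lemma colIdeal_isMaximal (q₀ : MIdx K r) : (colIdeal (k := k) q₀ S).IsMaximal := by
  rw [Ideal.isMaximal_iff]
  constructor
  · intro h1
    have := h1 q₀.2
    simp [Matrix.one_apply] at this
  · intro J x hIJ hx hxJ
    obtain ⟨t, ht⟩ := not_forall.mp hx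
    set c := ((x : Matrix (MIdx K r) (MIdx K r) (DualNumber k)) ⟨q₀.1, t⟩ q₀).fst with hc
    let a : ↥(ModelAlgebra k K r S) := ⟨Econst q₀ ⟨q₀.1, t⟩ c⁻¹, Econst_mem q₀ ⟨q₀.1, t⟩ rfl c⁻¹⟩
    have key : (1 : ↥(ModelAlgebra k K r S)) - a * x ∈ colIdeal (k := k) q₀ S := by
      intro s
      have hax : ((↑(a * x) : Matrix (MIdx K r) (MIdx K r) (DualNumber k)) ⟨q₀.1, s⟩ q₀).fst
          = if (⟨q₀.1, s⟩ : MIdx K r) = q₀ then 1 else 0 := by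
        show (((Econst q₀ ⟨q₀.1, t⟩ c⁻¹ : Matrix (MIdx K r) (MIdx K r) (DualNumber k)) * (x : Matrix (MIdx K r) (MIdx K r) (DualNumber k)))
          ⟨q₀.1, s⟩ q₀).fst = _
        rw [Matrix.mul_apply, TrivSqZeroExt.fst_sum]
        have hterm : ∀ y, ((Econst q₀ ⟨q₀.1, t⟩ c⁻¹ : Matrix (MIdx K r) (MIdx K r) (DualNumber k))
              ⟨q₀.1, s⟩ y * (x : Matrix (MIdx K r) (MIdx K r) (DualNumber k)) y q₀).fst
            = if (⟨q₀.1, s⟩ : MIdx K r) = q₀ then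
                (if y = (⟨q₀.1, t⟩ : MIdx K r) then
                  c⁻¹ * ((x : Matrix (MIdx K r) (MIdx K r) (DualNumber k)) y q₀).fst else 0)
              else 0 := by
          intro y
          rw [TrivSqZeroExt.fst_mul, Econst]
          by_cases h1 : (⟨q₀.1, s⟩ : MIdx K r) = q₀ <;>
            by_cases h2 : y = (⟨q₀.1, t⟩ : MIdx K r) <;> simp [h1, h2]
        rw [Finset.sum_congr rfl fun y _ => hterm y]
        by_cases h1 : (⟨q₀.1, s⟩ : MIdx K r) = q₀
        · simp only [h1, if_true]
          rw [Finset.sum_ite_eq' Finset.univ (⟨q₀.1, t⟩ : MIdx K r)]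
          simp [← hc, inv_mul_cancel₀ ht]
        · simp [h1]
      show (((1 : Matrix (MIdx K r) (MIdx K r) (DualNumber k))
          - ↑(a * x)) ⟨q₀.1, s⟩ q₀).fst = 0
      rw [Matrix.sub_apply, TrivSqZeroExt.fst_sub, hax, Matrix.one_apply]
      by_cases h1 : (⟨q₀.1, s⟩ : MIdx K r) = q₀ <;> simp [h1]
    have hone : (1 : ↥(ModelAlgebra k K r S)) = ((1 : ↥(ModelAlgebra k K r S)) - a * x) + a * x :=
      (sub_add_cancel _ _).symm
    rw [hone]
    exact J.add_mem (hIJ key) (Ideal.mul_mem_left J a hxJ)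

lemma fst_eq_zero_of_mem_jacobson (m : ↥(ModelAlgebra k K r S))
    (h : m ∈ (⊥ : Ideal ↥(ModelAlgebra k K r S)).jacobson) (p q : MIdx K r) :
    ((m : Matrix (MIdx K r) (MIdx K r) (DualNumber k)) p q).fst = 0 := by
  by_cases hpq : p.1 = q.1
  · rw [Ideal.jacobson] at h
    have hm := Submodule.mem_sInf.mp h (colIdeal (k := k) q S) ⟨bot_le, colIdeal_isMaximal q⟩
    obtain ⟨p1, p2⟩ := p
    dsimp at hpq
    subst hpq
    exact hm p2
  · exact (memA m.2 p q).1 hpq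

def tupleIdeal (V : Fin K → Submodule k (MIdx K r → k)) : Ideal ↥(ModelAlgebra k K r S) where
  carrier := TupleSet k K r S V
  zero_mem' := by
    refine ⟨Submodule.zero_mem _, fun p => ?_⟩
    have h0 : (fun q => ((↑(0 : ↥(ModelAlgebra k K r S)) :
        Matrix (MIdx K r) (MIdx K r) (DualNumber k)) p q).snd) = (0 : MIdx K r → k) := by
      funext q; simp
    exact h0 ▸ (V p.1).zero_mem
  add_mem' := by
    intro a b ha hb
    refine ⟨Submodule.add_mem _ ha.1 hb.1, fun p => ?_⟩
    have h0 : (fun q => ((↑(a + b) : Matrix (MIdx K r) (MIdx K r) (DualNumber k)) p q).snd)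
        = (fun q => ((a : Matrix (MIdx K r) (MIdx K r) (DualNumber k)) p q).snd)
          + (fun q => ((b : Matrix (MIdx K r) (MIdx K r) (DualNumber k)) p q).snd) := by
      funext q
      show (((a : Matrix (MIdx K r) (MIdx K r) (DualNumber k))
        + (b : Matrix (MIdx K r) (MIdx K r) (DualNumber k))) p q).snd = _
      simp [Matrix.add_apply]
    exact h0 ▸ Submodule.add_mem _ (ha.2 p) (hb.2 p)
  smul_mem' := by
    intro c m hm
    refine ⟨Submodule.smul_mem _ c hm.1, fun p => ?_⟩
    have hrow : (fun q => ((↑(c • m) : Matrix (MIdx K r) (MIdx K r) (DualNumber k)) p q).snd)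
        = ∑ x : MIdx K r, ((c : Matrix (MIdx K r) (MIdx K r) (DualNumber k)) p x).fst
            • (fun q => ((m : Matrix (MIdx K r) (MIdx K r) (DualNumber k)) x q).snd) := by
      funext q
      show (((c : Matrix (MIdx K r) (MIdx K r) (DualNumber k))
        * (m : Matrix (MIdx K r) (MIdx K r) (DualNumber k))) p q).snd = _
      rw [Matrix.mul_apply, TrivSqZeroExt.snd_sum, Finset.sum_apply]
      refine Finset.sum_congr rfl fun x _ => ?_
      rw [TrivSqZeroExt.snd_mul, fst_eq_zero_of_mem_jacobson m hm.1 x q]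
      simp
    rw [hrow]
    refine Submodule.sum_mem _ fun x _ => ?_
    by_cases hx : x.1 = p.1
    · exact hx ▸ Submodule.smul_mem _ _ (hm.2 x)
    · rw [(memA c.2 p x).1 (fun h => hx h.symm), zero_smul]
      exact (V p.1).zero_mem

def spanV (L : Ideal ↥(ModelAlgebra k K r S)) (i : Fin K) : Submodule k (MIdx K r → k) :=
  Submodule.span k {v | ∃ m ∈ L, ∃ t : Fin (r i),
    v = fun q => ((m : Matrix (MIdx K r) (MIdx K r) (DualNumber k)) ⟨i, t⟩ q).snd}

lemma spanV_le (L : Ideal ↥(ModelAlgebra k K r S)) (i : Fin K) :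
    spanV L i ≤ Vspace k K r S i := by
  rw [spanV, Submodule.span_le]
  rintro v ⟨m, hm, t, rfl⟩
  exact fun q hq => (memA m.2 ⟨i, t⟩ q).2 hq

lemma exists_rowMat (L : Ideal ↥(ModelAlgebra k K r S))
    (hL : L ≤ (⊥ : Ideal ↥(ModelAlgebra k K r S)).jacobson) (p₀ : MIdx K r)
    {v : MIdx K r → k} (hv : v ∈ spanV L p₀.1) :
    ∃ m' ∈ L, (m' : Matrix (MIdx K r) (MIdx K r) (DualNumber k)) = rowMat p₀ v := by
  induction hv using Submodule.span_induction with
  | mem v hv =>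
    obtain ⟨m, hm, t, rfl⟩ := hv
    refine ⟨⟨Econst p₀ ⟨p₀.1, t⟩ 1, Econst_mem p₀ ⟨p₀.1, t⟩ rfl 1⟩ * m,
      Ideal.mul_mem_left L _ hm, ?_⟩
    show (Econst p₀ ⟨p₀.1, t⟩ 1 : Matrix (MIdx K r) (MIdx K r) (DualNumber k))
      * (m : Matrix (MIdx K r) (MIdx K r) (DualNumber k)) = _
    funext p q
    have hterm : ∀ y, (Econst p₀ ⟨p₀.1, t⟩ 1 p y
          * (m : Matrix (MIdx K r) (MIdx K r) (DualNumber k)) y q)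
        = if p = p₀ then (if y = (⟨p₀.1, t⟩ : MIdx K r) then
            (m : Matrix (MIdx K r) (MIdx K r) (DualNumber k)) y q else 0) else 0 := by
      intro y
      rw [Econst]
      by_cases h1 : p = p₀ <;> by_cases h2 : y = (⟨p₀.1, t⟩ : MIdx K r) <;>
        simp [h1, h2, TrivSqZeroExt.inl_one]
    rw [Matrix.mul_apply, Finset.sum_congr rfl fun y _ => hterm y]
    by_cases h1 : p = p₀
    · simp only [h1, if_true]
      rw [Finset.sum_ite_eq' Finset.univ (⟨p₀.1, t⟩ : MIdx K r)]
      simp only [Finset.mem_univ, if_true, rowMat, if_pos rfl]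
      apply TrivSqZeroExt.ext
      · rw [fst_eq_zero_of_mem_jacobson m (hL hm), TrivSqZeroExt.fst_inr]
      · rw [TrivSqZeroExt.snd_inr]
    · simp [h1, rowMat, Finset.sum_const_zero]
  | zero =>
    refine ⟨0, L.zero_mem, ?_⟩
    funext p q
    simp [rowMat]
  | add x y hx hy ihx ihy =>
    obtain ⟨mx, hmx, ex⟩ := ihx
    obtain ⟨my, hmy, ey⟩ := ihy
    refine ⟨mx + my, L.add_mem hmx hmy, ?_⟩
    show (mx : Matrix (MIdx K r) (MIdx K r) (DualNumber k)) + ↑my = _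
    rw [ex, ey]
    funext p q
    by_cases h1 : p = p₀ <;> simp [rowMat, h1, TrivSqZeroExt.inr_add, add_smul]
  | smul c x hx ih =>
    obtain ⟨mx, hmx, ex⟩ := ih
    refine ⟨c • mx, Submodule.smul_of_tower_mem L c hmx, ?_⟩
    show c • (mx : Matrix (MIdx K r) (MIdx K r) (DualNumber k)) = _
    rw [ex]
    funext p q
    by_cases h1 : p = p₀ <;> simp [rowMat, h1, ← TrivSqZeroExt.inr_smul, mul_smul]

lemma subset_tupleSet (L : Ideal ↥(ModelAlgebra k K r S))
    (hL : L ≤ (⊥ : Ideal ↥(ModelAlgebra k K r S)).jacobson) :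
    (L : Set ↥(ModelAlgebra k K r S)) ⊆ TupleSet k K r S (spanV L) :=
  fun m hm => ⟨hL hm, fun p => Submodule.subset_span ⟨m, hm, p.2, rfl⟩⟩

lemma tupleSet_subset (L : Ideal ↥(ModelAlgebra k K r S))
    (hL : L ≤ (⊥ : Ideal ↥(ModelAlgebra k K r S)).jacobson) :
    TupleSet k K r S (spanV L) ⊆ (L : Set ↥(ModelAlgebra k K r S)) := by
  rintro m ⟨hj, hrow⟩
  have hf := fun p q => fst_eq_zero_of_mem_jacobson m hj p q
  choose f hfL hfe using fun p : MIdx K r => exists_rowMat L hL p (hrow p)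
  have hm : m = ∑ p : MIdx K r, f p := by
    apply Subtype.ext
    rw [AddSubmonoidClass.coe_finset_sum]
    have hsum : (∑ p : MIdx K r, (f p : Matrix (MIdx K r) (MIdx K r) (DualNumber k)))
        = fun p' q => TrivSqZeroExt.inr
            (((m : Matrix (MIdx K r) (MIdx K r) (DualNumber k)) p' q).snd) := by
      funext p' q
      simp only [hfe]
      rw [Matrix.sum_apply]
      simp only [rowMat]
      rw [Finset.sum_ite_eq]
      simp
    rw [hsum]
    funext p' q
    apply TrivSqZeroExt.ext
    · rw [hf p' q, TrivSqZeroExt.fst_inr]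
    · rw [TrivSqZeroExt.snd_inr]
  rw [hm]
  exact Submodule.sum_mem L fun p _ => hfL p

lemma tuple_le_of_subset (hr : ∀ i, 0 < r i) (V V' : Fin K → Submodule k (MIdx K r → k))
    (hV : ∀ i, V i ≤ Vspace k K r S i)
    (h : TupleSet k K r S V ⊆ TupleSet k K r S V') (i : Fin K) : V i ≤ V' i := by
  intro v hv
  set p₀ : MIdx K r := ⟨i, ⟨0, hr i⟩⟩ with hp₀
  have hvV : v ∈ Vspace k K r S i := hV i hv
  set m : ↥(ModelAlgebra k K r S) := ⟨rowMat p₀ v, rowMat_mem p₀ v hvV⟩ with hmdef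
  have he : (fun q => ((m : Matrix (MIdx K r) (MIdx K r) (DualNumber k)) p₀ q).snd) = v := by
    funext q; simp [hmdef, rowMat]
  have hm : m ∈ TupleSet k K r S V := by
    refine ⟨mem_jacobson_of_fst m fun p q => ?_, fun p => ?_⟩
    · show ((rowMat p₀ v) p q).fst = 0
      by_cases hp : p = p₀ <;> simp [rowMat, hp]
    · by_cases hp : p = p₀
      · subst hp
        exact he ▸ hv
      · have h0 : (fun q => ((m : Matrix (MIdx K r) (MIdx K r) (DualNumber k)) p q).snd)
            = (0 : MIdx K r → k) := by
          funext q; simp [hmdef, rowMat, hp]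
        exact h0 ▸ (V p.1).zero_mem
  exact he ▸ (h hm).2 p₀

end ModelAux

/-- the left ideals of the matrix-model algebra `A` contained in `J(A)` are in
bijection with tuples `(V₁, …, V_K)` of subspaces `Vᵢ ⊆ 𝕍ᵢ`: each tuple yields the left ideal
of all `M ∈ J(A)` whose `(i,t)`-th row of `x`-coefficients lies in `Vᵢ`, and every left ideal
contained in `J(A)` arises from exactly one tuple. -/
theorem leftIdeals_in_radical_biject_with_tuples
    (k : Type) [Field k] (K : ℕ) (r : Fin K → ℕ) (hr : ∀ i, 0 < r i)
    (S : Set (Fin K × Fin K)) :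
    (∀ V : Fin K → Submodule k (MIdx K r → k), (∀ i, V i ≤ Vspace k K r S i) →
      ∃ L : Ideal ↥(ModelAlgebra k K r S),
        L ≤ (⊥ : Ideal ↥(ModelAlgebra k K r S)).jacobson ∧
        (L : Set ↥(ModelAlgebra k K r S)) = TupleSet k K r S V) ∧
    (∀ L : Ideal ↥(ModelAlgebra k K r S),
      L ≤ (⊥ : Ideal ↥(ModelAlgebra k K r S)).jacobson →
      ∃! V : {V : Fin K → Submodule k (MIdx K r → k) // ∀ i, V i ≤ Vspace k K r S i},
        (L : Set ↥(ModelAlgebra k K r S)) = TupleSet k K r S V.1) := by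
  constructor
  · intro V hVle
    exact ⟨ModelAux.tupleIdeal V, fun m hm => hm.1, rfl⟩
  · intro L hL
    have hmain : (L : Set ↥(ModelAlgebra k K r S)) = TupleSet k K r S (ModelAux.spanV L) :=
      Set.Subset.antisymm (ModelAux.subset_tupleSet L hL) (ModelAux.tupleSet_subset L hL)
    refine ⟨⟨ModelAux.spanV L, ModelAux.spanV_le L⟩, hmain, ?_⟩
    rintro ⟨V', hV'⟩ hEq
    have hset : TupleSet k K r S V' = TupleSet k K r S (ModelAux.spanV L) :=
      hEq.symm.trans hmain
    apply Subtype.ext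
    funext i
    exact le_antisymm
      (ModelAux.tuple_le_of_subset hr V' (ModelAux.spanV L) hV' hset.subset i)
      (ModelAux.tuple_le_of_subset hr (ModelAux.spanV L) V' (ModelAux.spanV_le L)
        hset.symm.subset i)
end

section
/- Let k be a field and Q a finite quiver with vertex set {1, …, m}. Let d, d' ∈ ℕ^m be dimension vectors with d' ≤ d coordinatewise. If the set of G(d')-orbits on 𝔸_Q(d') is infinite, then the set of G(d)-orbits on 𝔸_Q(d) is infinite. -/
open scoped Matrix

/-- The representation space `𝔸_Q(d)` of a quiver with vertex set `Fin m`, arrow set `E` and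
source/target maps `src, tgt`, for the dimension vector `d`. -/
def RepSpace (k : Type) [Field k] {m : ℕ} {E : Type} (src tgt : E → Fin m)
    (d : Fin m → ℕ) : Type :=
  ∀ a : E, Matrix (Fin (d (tgt a))) (Fin (d (src a))) k

/-- Two points of `𝔸_Q(d)` lie in the same `G(d)`-orbit, where
`G(d) = ∏ᵢ GL_{dᵢ}(k)` acts by `(g · x)_α = g_{tgt α} x_α g_{src α}⁻¹`. -/
def RepOrbitRel (k : Type) [Field k] {m : ℕ} {E : Type} (src tgt : E → Fin m)
    (d : Fin m → ℕ) (x y : RepSpace k src tgt d) : Prop :=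
  ∃ g : ∀ i : Fin m, Matrix.GeneralLinearGroup (Fin (d i)) k,
    ∀ a : E, y a = ((g (tgt a) : Matrix (Fin (d (tgt a))) (Fin (d (tgt a))) k) * x a) *
      (((g (src a))⁻¹ : Matrix.GeneralLinearGroup (Fin (d (src a))) k) :
        Matrix (Fin (d (src a))) (Fin (d (src a))) k)





section Aux

variable {K : Type} [Field K]

/-- In a vector space, if `p ⊔ q = ⊤` then `p` has a complement inside `q`. -/
lemma exists_isCompl_le {V : Type} [AddCommGroup V] [Module K V]
    {p q : Submodule K V} (h : p ⊔ q = ⊤) :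
    ∃ r : Submodule K V, r ≤ q ∧ IsCompl p r := by
  obtain ⟨r₀, hr₀⟩ := Submodule.exists_isCompl ((p ⊓ q).comap q.subtype)
  refine ⟨r₀.map q.subtype, Submodule.map_subtype_le _ _, ?_, ?_⟩
  · rw [disjoint_iff, eq_bot_iff]
    rintro x ⟨hxp, hxr⟩
    obtain ⟨y, hy, rfl⟩ := hxr
    have hy0 : y ∈ ((p ⊓ q).comap q.subtype) ⊓ r₀ := ⟨⟨hxp, y.2⟩, hy⟩
    rw [hr₀.inf_eq_bot] at hy0
    have : y = (0 : q) := by simpa using hy0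
    simp [this]
  · rw [codisjoint_iff, eq_top_iff, ← h]
    refine sup_le le_sup_left ?_
    intro x hx
    have : (⟨x, hx⟩ : q) ∈ ((p ⊓ q).comap q.subtype) ⊔ r₀ := by
      rw [hr₀.sup_eq_top]; trivial
    obtain ⟨y, hy, z, hz, hyz⟩ := Submodule.mem_sup.mp this
    have hx' : x = (y : V) + (z : V) := by
      have := congrArg (Subtype.val) hyz; simpa using this.symm
    rw [hx']
    exact Submodule.add_mem _ (Submodule.mem_sup_left hy.1) 
      (Submodule.mem_sup_right ⟨z, hz, rfl⟩)

/-- Key linear algebra lemma. -/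
lemma key_lin {V S : Type} [AddCommGroup V] [Module K V] [AddCommGroup S] [Module K S]
    [FiniteDimensional K V] [FiniteDimensional K S]
    (a : V →ₗ[K] V) (b : S →ₗ[K] V) (c : V →ₗ[K] S)
    (h1 : LinearMap.ker a ⊓ LinearMap.ker c = ⊥)
    (h2 : LinearMap.range a ⊔ LinearMap.range b = ⊤) :
    ∃ mm : S →ₗ[K] S, Function.Injective (a + b ∘ₗ mm ∘ₗ c) := by
  obtain ⟨U, hUb, hU⟩ := exists_isCompl_le h2
  -- iso between ker a and U
  have hfr : Module.finrank K (LinearMap.ker a) = Module.finrank K U := by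
    have e1 := LinearMap.finrank_range_add_finrank_ker a
    have e2 := Submodule.finrank_add_eq_of_isCompl hU
    omega
  let φ : (LinearMap.ker a) ≃ₗ[K] U := LinearEquiv.ofFinrankEq _ _ hfr
  -- a section of b over U
  obtain ⟨sec, hsec⟩ := (b.rangeRestrict).exists_rightInverse_of_surjective
    (LinearMap.range_rangeRestrict b)
  have hsec' : ∀ u : LinearMap.range b, b (sec u) = (u : V) := by
    intro u
    have := congrArg (fun f => ((f u : LinearMap.range b) : V)) hsec
    simpa using this
  let ρ : U →ₗ[K] S := sec ∘ₗ Submodule.inclusion hUb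
  have hρ : ∀ u : U, b (ρ u) = (u : V) := fun u => hsec' _
  -- c restricted to ker a, injective
  let cK : (LinearMap.ker a) →ₗ[K] S := c ∘ₗ (LinearMap.ker a).subtype
  have hcKinj : Function.Injective cK := by
    rw [← LinearMap.ker_eq_bot, eq_bot_iff]
    rintro ⟨v, hv⟩ hvk
    have : v ∈ LinearMap.ker a ⊓ LinearMap.ker c := ⟨hv, hvk⟩
    rw [h1] at this
    simpa using this
  let ψ : (LinearMap.ker a) ≃ₗ[K] (LinearMap.range cK) := LinearEquiv.ofInjective cK hcKinj
  obtain ⟨W', hW'⟩ := Submodule.exists_isCompl (LinearMap.range cK)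
  let π : S →ₗ[K] (LinearMap.range cK) := Submodule.projectionOnto _ _ hW'
  refine ⟨ρ ∘ₗ φ.toLinearMap ∘ₗ ψ.symm.toLinearMap ∘ₗ π, ?_⟩
  rw [← LinearMap.ker_eq_bot, eq_bot_iff]
  intro v hv
  have hv' : a v + b (ρ (φ (ψ.symm (π (c v))))) = 0 := by simpa using hv
  set u : U := φ (ψ.symm (π (c v))) with hu
  rw [hρ u] at hv'
  have hav : a v ∈ LinearMap.range a ⊓ U := by
    constructor
    · exact LinearMap.mem_range_self a v
    · have : a v = -(u : V) := by linear_combination (norm := module) hv'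
      rw [this]; exact neg_mem u.2
  rw [hU.inf_eq_bot] at hav
  have hav0 : a v = 0 := hav
  have hu0 : (u : V) = 0 := by
    have : (u : V) = -(a v) := by linear_combination (norm := module) hv'
    simp [this, hav0]
  have hu0' : u = 0 := Subtype.ext hu0
  have hπ0 : π (c v) = 0 := by
    have h1' := congrArg φ.symm (hu.symm.trans hu0')
    rw [LinearEquiv.symm_apply_apply, map_zero] at h1'
    have := congrArg ψ h1'
    rw [LinearEquiv.apply_symm_apply, map_zero] at this
    exact this
  have hvK : v ∈ LinearMap.ker a := hav0
  have hcvW : c v ∈ LinearMap.range cK := ⟨⟨v, hvK⟩, rfl⟩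
  have : π (c v) = ⟨c v, hcvW⟩ := by
    have := Submodule.projectionOnto_apply_left hW' (⟨c v, hcvW⟩ : LinearMap.range cK)
    simpa [π] using this
  rw [this] at hπ0
  have hcv0 : c v = 0 := by simpa using congrArg Subtype.val hπ0
  have : v ∈ LinearMap.ker a ⊓ LinearMap.ker c := ⟨hvK, hcv0⟩
  rw [h1] at this
  simpa using this

end Aux

section KeyMat

variable {K : Type} [Field K]

/-- Key matrix lemma: if a block matrix `[[A,B],[C,D]]` is invertible, then there is `M`
with `A + B * M * C` invertible. -/
lemma key_mat {n e : ℕ} (A : Matrix (Fin n) (Fin n) K) (B : Matrix (Fin n) (Fin e) K)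
    (C : Matrix (Fin e) (Fin n) K) (D : Matrix (Fin e) (Fin e) K)
    (h : IsUnit (Matrix.fromBlocks A B C D)) :
    ∃ M : Matrix (Fin e) (Fin e) K, IsUnit (A + B * M * C) := by
  have hbij : Function.Bijective (Matrix.fromBlocks A B C D).mulVec := by
    have h1 := h.map (Matrix.toLinAlgEquiv' (R := K))
    have h2 := (Module.End.isUnit_iff _).mp h1
    exact h2
  have h1 : LinearMap.ker (Matrix.toLin' A) ⊓ LinearMap.ker (Matrix.toLin' C) = ⊥ := by
    rw [eq_bot_iff]
    rintro v ⟨hva, hvc⟩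
    simp only [SetLike.mem_coe, LinearMap.mem_ker, Matrix.toLin'_apply] at hva hvc
    have hz : (Matrix.fromBlocks A B C D).mulVec (Sum.elim v 0) = 0 := by
      rw [Matrix.fromBlocks_mulVec]
      funext x
      cases x <;> simp [hva, hvc, Matrix.mulVec_zero]
    have h0 : (Matrix.fromBlocks A B C D).mulVec 0 = 0 := Matrix.mulVec_zero _
    have := hbij.1 (hz.trans h0.symm)
    have hv0 : v = 0 := by
      funext i
      exact congrFun this (Sum.inl i)
    simp [hv0]
  have h2 : LinearMap.range (Matrix.toLin' A) ⊔ LinearMap.range (Matrix.toLin' B) = ⊤ := by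
    rw [eq_top_iff]
    intro v' _
    obtain ⟨w, hw⟩ := hbij.2 (Sum.elim v' 0)
    have hwdec : w = Sum.elim (fun i => w (Sum.inl i)) (fun j => w (Sum.inr j)) := by
      funext x; cases x <;> rfl
    rw [hwdec, Matrix.fromBlocks_mulVec] at hw
    have hv' : A *ᵥ (fun i => w (Sum.inl i)) + B *ᵥ (fun j => w (Sum.inr j)) = v' := by
      funext i
      exact congrFun hw (Sum.inl i)
    exact hv' ▸ Submodule.add_mem_sup ⟨_, Matrix.toLin'_apply _ _⟩ ⟨_, Matrix.toLin'_apply _ _⟩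
  obtain ⟨mm, hmm⟩ := key_lin (Matrix.toLin' A) (Matrix.toLin' B) (Matrix.toLin' C) h1 h2
  refine ⟨LinearMap.toMatrix' mm, ?_⟩
  have heq : Matrix.toLin' (A + B * LinearMap.toMatrix' mm * C)
      = Matrix.toLin' A + Matrix.toLin' B ∘ₗ mm ∘ₗ Matrix.toLin' C := by
    rw [map_add, Matrix.toLin'_mul, Matrix.toLin'_mul, Matrix.toLin'_toMatrix',
      LinearMap.comp_assoc]
  have hinj : Function.Injective (Matrix.toLin' (A + B * LinearMap.toMatrix' mm * C)) := by
    rw [heq]; exact hmm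
  have hbij2 : Function.Bijective (Matrix.toLin' (A + B * LinearMap.toMatrix' mm * C)) :=
    ⟨hinj, LinearMap.injective_iff_surjective.mp hinj⟩
  have hunit : IsUnit (Matrix.toLinAlgEquiv' (R := K) (A + B * LinearMap.toMatrix' mm * C)) :=
    (Module.End.isUnit_iff _).mpr hbij2
  have := hunit.map (Matrix.toLinAlgEquiv' (R := K)).symm
  rwa [AlgEquiv.symm_apply_apply] at this

end KeyMat


section Main

variable {k : Type} [Field k] {m : ℕ} {E : Type}

lemma repOrbitRel_equivalence (src tgt : E → Fin m) (d : Fin m → ℕ) :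
    Equivalence (RepOrbitRel k src tgt d) := by
  constructor
  · intro x
    exact ⟨fun _ => 1, fun a => by simp⟩
  · rintro x y ⟨g, hg⟩
    refine ⟨fun i => (g i)⁻¹, fun a => ?_⟩
    rw [hg a, inv_inv]
    simp only [Matrix.mul_assoc, Units.inv_mul, Matrix.mul_one]
    rw [← Matrix.mul_assoc, Units.inv_mul, Matrix.one_mul]
  · rintro x y z ⟨g, hg⟩ ⟨g', hg'⟩
    refine ⟨fun i => g' i * g i, fun a => ?_⟩
    rw [hg' a, hg a, mul_inv_rev]
    simp only [Units.val_mul, Matrix.mul_assoc]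

/-- The reindexing equivalence. -/
def vEquiv (d d' : Fin m → ℕ) (hle : ∀ i, d' i ≤ d i) (i : Fin m) :
    (Fin (d' i) ⊕ Fin (d i - d' i)) ≃ Fin (d i) :=
  finSumFinEquiv.trans (finCongr (Nat.add_sub_cancel' (hle i)))

/-- Zero-padding of a representation. -/
def padMap (src tgt : E → Fin m) (d d' : Fin m → ℕ) (hle : ∀ i, d' i ≤ d i)
    (x : RepSpace k src tgt d') : RepSpace k src tgt d :=
  fun a => (Matrix.fromBlocks (x a) 0 0 0).submatrix
    (vEquiv d d' hle (tgt a)).symm (vEquiv d d' hle (src a)).symm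

lemma padMap_rel (src tgt : E → Fin m) (d d' : Fin m → ℕ) (hle : ∀ i, d' i ≤ d i)
    (x y : RepSpace k src tgt d') (hxy : RepOrbitRel k src tgt d' x y) :
    RepOrbitRel k src tgt d (padMap src tgt d d' hle x) (padMap src tgt d d' hle y) := by
  obtain ⟨g, hg⟩ := hxy
  set σ := vEquiv d d' hle with hσ
  refine ⟨fun i => ⟨(Matrix.fromBlocks (↑(g i)) 0 0 1).submatrix (σ i).symm (σ i).symm,
      (Matrix.fromBlocks (↑((g i)⁻¹)) 0 0 1).submatrix (σ i).symm (σ i).symm, ?_, ?_⟩,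
    fun a => ?_⟩
  · rw [Matrix.submatrix_mul_equiv, Matrix.fromBlocks_multiply]
    simp only [Units.mul_inv, Matrix.mul_zero, Matrix.zero_mul, Matrix.mul_one,
      Matrix.one_mul, add_zero, zero_add, Matrix.fromBlocks_one, Matrix.submatrix_one_equiv]
  · rw [Matrix.submatrix_mul_equiv, Matrix.fromBlocks_multiply]
    simp only [Units.inv_mul, Matrix.mul_zero, Matrix.zero_mul, Matrix.mul_one,
      Matrix.one_mul, add_zero, zero_add, Matrix.fromBlocks_one, Matrix.submatrix_one_equiv]
  · rw [Units.inv_mk]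
    simp only [Units.val_mk]
    simp only [padMap]
    rw [Matrix.submatrix_mul_equiv, Matrix.submatrix_mul_equiv,
      Matrix.fromBlocks_multiply, Matrix.fromBlocks_multiply]
    rw [hg a]
    simp only [Matrix.mul_zero, Matrix.zero_mul, Matrix.mul_one, Matrix.one_mul,
      add_zero, zero_add]
    rfl


lemma padMap_rel_rev (src tgt : E → Fin m) (d d' : Fin m → ℕ) (hle : ∀ i, d' i ≤ d i)
    (x y : RepSpace k src tgt d')
    (hxy : RepOrbitRel k src tgt d (padMap src tgt d d' hle x) (padMap src tgt d d' hle y)) :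
    RepOrbitRel k src tgt d' x y := by
  obtain ⟨G, hG⟩ := hxy
  set σ := vEquiv d d' hle with hσ
  set N : ∀ i, Matrix (Fin (d' i) ⊕ Fin (d i - d' i)) (Fin (d' i) ⊕ Fin (d i - d' i)) k :=
    fun i => (↑(G i) : Matrix _ _ k).submatrix (σ i) (σ i) with hNdef
  have hNunit : ∀ i, IsUnit (N i) := by
    intro i
    refine ⟨⟨N i, (↑((G i)⁻¹) : Matrix _ _ k).submatrix (σ i) (σ i), ?_, ?_⟩, rfl⟩
    · rw [hNdef]
      simp only []
      rw [Matrix.submatrix_mul_equiv, Units.mul_inv, Matrix.submatrix_one_equiv]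
    · rw [hNdef]
      simp only []
      rw [Matrix.submatrix_mul_equiv, Units.inv_mul, Matrix.submatrix_one_equiv]
  have hE : ∀ a : E, Matrix.fromBlocks (y a) 0 0 (0 : Matrix (Fin (d (tgt a) - d' (tgt a))) (Fin (d (src a) - d' (src a))) k) * N (src a)
      = N (tgt a) * Matrix.fromBlocks (x a) 0 0 (0 : Matrix (Fin (d (tgt a) - d' (tgt a))) (Fin (d (src a) - d' (src a))) k) := by
    intro a
    have key : (padMap src tgt d d' hle y) a * (↑(G (src a)) : Matrix (Fin (d (src a))) (Fin (d (src a))) k)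
        = (↑(G (tgt a)) : Matrix (Fin (d (tgt a))) (Fin (d (tgt a))) k) * (padMap src tgt d d' hle x) a := by
      rw [hG a, Matrix.mul_assoc, Units.inv_mul, Matrix.mul_one]
    calc Matrix.fromBlocks (y a) 0 0 (0 : Matrix (Fin (d (tgt a) - d' (tgt a))) (Fin (d (src a) - d' (src a))) k) * N (src a)
        = ((padMap src tgt d d' hle y) a).submatrix (σ (tgt a)) (σ (src a))
            * ((↑(G (src a)) : Matrix _ _ k).submatrix (σ (src a)) (σ (src a))) := by
          rw [padMap]
          simp only [hσ, Matrix.submatrix_submatrix, Equiv.symm_comp_self, Matrix.submatrix_id_id]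
          rfl
      _ = ((padMap src tgt d d' hle y) a * (↑(G (src a)) : Matrix (Fin (d (src a))) (Fin (d (src a))) k)).submatrix
            (σ (tgt a)) (σ (src a)) := Matrix.submatrix_mul_equiv _ _ _ _ _
      _ = ((↑(G (tgt a)) : Matrix (Fin (d (tgt a))) (Fin (d (tgt a))) k) * (padMap src tgt d d' hle x) a).submatrix
            (σ (tgt a)) (σ (src a)) := by rw [key]
      _ = N (tgt a) * Matrix.fromBlocks (x a) 0 0 (0 : Matrix (Fin (d (tgt a) - d' (tgt a))) (Fin (d (src a) - d' (src a))) k) := by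
          have h2 : N (tgt a) * Matrix.fromBlocks (x a) 0 0 (0 : Matrix (Fin (d (tgt a) - d' (tgt a))) (Fin (d (src a) - d' (src a))) k)
              = ((↑(G (tgt a)) : Matrix _ _ k).submatrix (σ (tgt a)) (σ (tgt a)))
                * (((padMap src tgt d d' hle x) a).submatrix (σ (tgt a)) (σ (src a))) := by
            rw [padMap]
            simp only [hσ, Matrix.submatrix_submatrix, Equiv.symm_comp_self, Matrix.submatrix_id_id]
            rfl
          rw [h2, Matrix.submatrix_mul_equiv]
  set A : ∀ i, Matrix (Fin (d' i)) (Fin (d' i)) k := fun i => (N i).toBlocks₁₁ with hA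
  set B : ∀ i, Matrix (Fin (d' i)) (Fin (d i - d' i)) k := fun i => (N i).toBlocks₁₂ with hB
  set C : ∀ i, Matrix (Fin (d i - d' i)) (Fin (d' i)) k := fun i => (N i).toBlocks₂₁ with hC
  set D : ∀ i, Matrix (Fin (d i - d' i)) (Fin (d i - d' i)) k := fun i => (N i).toBlocks₂₂
    with hD
  have hN : ∀ i, N i = Matrix.fromBlocks (A i) (B i) (C i) (D i) :=
    fun i => (Matrix.fromBlocks_toBlocks (N i)).symm
  have hE' : ∀ a : E, Matrix.fromBlocks (y a * A (src a)) (y a * B (src a)) 0 0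
      = Matrix.fromBlocks (A (tgt a) * x a) 0 (C (tgt a) * x a) 0 := by
    intro a
    have := hE a
    rw [hN (src a), hN (tgt a), Matrix.fromBlocks_multiply, Matrix.fromBlocks_multiply] at this
    simpa only [Matrix.mul_zero, Matrix.zero_mul, add_zero, zero_add] using this
  have e11 : ∀ a : E, y a * A (src a) = A (tgt a) * x a := by
    intro a
    have := congrArg Matrix.toBlocks₁₁ (hE' a)
    simpa only [Matrix.toBlocks_fromBlocks₁₁] using this
  have e12 : ∀ a : E, y a * B (src a) = 0 := by
    intro a
    have := congrArg Matrix.toBlocks₁₂ (hE' a)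
    simpa only [Matrix.toBlocks_fromBlocks₁₂] using this
  have e21 : ∀ a : E, C (tgt a) * x a = 0 := by
    intro a
    have := congrArg Matrix.toBlocks₂₁ (hE' a)
    simpa only [Matrix.toBlocks_fromBlocks₂₁] using this.symm
  have hKey : ∀ i, ∃ Mi : Matrix (Fin (d i - d' i)) (Fin (d i - d' i)) k,
      IsUnit (A i + B i * Mi * C i) :=
    fun i => key_mat (A i) (B i) (C i) (D i) (hN i ▸ hNunit i)
  choose M hM using hKey
  refine ⟨fun i => (hM i).unit, fun a => ?_⟩
  have eq2 : y a * (↑((hM (src a)).unit) : Matrix (Fin (d' (src a))) (Fin (d' (src a))) k)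
      = (↑((hM (tgt a)).unit) : Matrix (Fin (d' (tgt a))) (Fin (d' (tgt a))) k) * x a := by
    rw [IsUnit.unit_spec, IsUnit.unit_spec, Matrix.mul_add, Matrix.add_mul, e11 a]
    congr 1
    rw [← Matrix.mul_assoc, ← Matrix.mul_assoc, e12 a, Matrix.zero_mul, Matrix.zero_mul,
      Matrix.mul_assoc, e21 a, Matrix.mul_zero]
  rw [← eq2, Matrix.mul_assoc, Units.mul_inv, Matrix.mul_one]


theorem infinite_orbits_mono' (k : Type) [Field k]
    {m : ℕ} {E : Type} [Fintype E] (src tgt : E → Fin m) (d d' : Fin m → ℕ)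
    (hle : ∀ i, d' i ≤ d i)
    (h : Infinite (Quot (RepOrbitRel k src tgt d'))) :
    Infinite (Quot (RepOrbitRel k src tgt d)) := by
  let F : Quot (RepOrbitRel k src tgt d') → Quot (RepOrbitRel k src tgt d) :=
    Quot.lift (fun x => Quot.mk _ (padMap src tgt d d' hle x))
      (fun x y hxy => Quot.sound (padMap_rel src tgt d d' hle x y hxy))
  have hinj : Function.Injective F := by
    intro p q
    induction p using Quot.ind with | _ x => ?_
    induction q using Quot.ind with | _ y => ?_
    intro hpq
    have heq : Quot.mk (RepOrbitRel k src tgt d) (padMap src tgt d d' hle x)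
        = Quot.mk _ (padMap src tgt d d' hle y) := hpq
    have hrel := Quot.eq.mp heq
    rw [(repOrbitRel_equivalence src tgt d).eqvGen_iff] at hrel
    exact Quot.sound (padMap_rel_rev src tgt d d' hle x y hrel)
  exact Infinite.of_injective F hinj

end Main

/-- if `d' ≤ d` coordinatewise and the set of `G(d')`-orbits on `𝔸_Q(d')` is
infinite, then the set of `G(d)`-orbits on `𝔸_Q(d)` is infinite. -/
theorem infinite_orbits_mono (k : Type) [Field k]
    {m : ℕ} {E : Type} [Fintype E] (src tgt : E → Fin m) (d d' : Fin m → ℕ)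
    (hle : ∀ i, d' i ≤ d i)
    (h : Infinite (Quot (RepOrbitRel k src tgt d'))) :
    Infinite (Quot (RepOrbitRel k src tgt d)) :=
  infinite_orbits_mono' k src tgt d d' hle h
end
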